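/- arXiv:2505.23629 — 2 statements merged into one kernel-verified Lean document; each statement's English description precedes it below -/
import Mathlib

section
/- Let A, B ∈ ℂ^{n×n} and let M be the 2n×2n block matrix [[A, B], [-conj(B), conj(A)]]. Then the characteristic polynomial of M has real coefficients; consequently the non-real eigenvalues of M occur in conjugate pairs and every real eigenvalue has even algebraic multiplicity. -/
open Matrix Polynomial

namespace BlockConjAux
open Module

variable {m : Type*} [Fintype m] [DecidableEq m]

lemma charpoly_eq_of_intertwine (M N P : Matrix m m ℂ) (h : N * P = P * M)
    (hP : P.det ≠ 0) : N.charpoly = M.charpoly := by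
  have hc : charmatrix N * P.map (C : ℂ →+* ℂ[X]) = P.map (C : ℂ →+* ℂ[X]) * charmatrix M := by
    simp only [charmatrix, sub_mul, mul_sub, RingHom.mapMatrix_apply]
    have h1 : Matrix.scalar m (X : ℂ[X]) * P.map (C : ℂ →+* ℂ[X])
        = P.map (C : ℂ →+* ℂ[X]) * Matrix.scalar m (X : ℂ[X]) :=
      (scalar_commute (X : ℂ[X]) (Commute.all _) _).eq
    have h2 : (N.map (C : ℂ →+* ℂ[X])) * P.map (C : ℂ →+* ℂ[X])
        = P.map (C : ℂ →+* ℂ[X]) * M.map (C : ℂ →+* ℂ[X]) := by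
      rw [← Matrix.map_mul, ← Matrix.map_mul, h]
    rw [h1, h2]
  have hd := congrArg det hc
  rw [det_mul, det_mul] at hd
  have hPC : (P.map (C : ℂ →+* ℂ[X])).det ≠ 0 := by
    rw [← RingHom.mapMatrix_apply, ← RingHom.map_det]
    simpa using hP
  have := mul_right_cancel₀ hPC (hd.trans (mul_comm _ _))
  simpa [Matrix.charpoly] using this

lemma charpoly_shift (N : Matrix m m ℂ) (μ : ℂ) :
    (N - μ • 1).charpoly = N.charpoly.comp (X + C μ) := by
  let f : ℂ[X] →+* ℂ[X] := eval₂RingHom C (X + C μ)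
  have hmap : (charmatrix N).map (f : ℂ[X] →+* ℂ[X]) = charmatrix (N - μ • 1) := by
    ext i j
    rcases eq_or_ne i j with rfl | hij
    · have h1 : f (X - C (N i i)) = X + C μ - C (N i i) := by
        rw [map_sub]; simp [f]
      simp only [Matrix.map_apply, charmatrix_apply_eq, h1, Matrix.sub_apply, Matrix.smul_apply,
        Matrix.one_apply_eq, smul_eq_mul, mul_one, map_sub]
      ring_nf
    · have h1 : f (-C (N i j)) = -C (N i j) := by
        rw [map_neg]; simp [f]
      simp only [Matrix.map_apply, charmatrix_apply_ne _ _ _ hij, Matrix.sub_apply,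
        Matrix.smul_apply, Matrix.one_apply_ne hij, smul_eq_mul, mul_zero, sub_zero, h1]
  have : N.charpoly.comp (X + C μ) = f N.charpoly := by
    simp [f, Polynomial.comp, coe_eval₂RingHom]
  rw [this, Matrix.charpoly, Matrix.charpoly, RingHom.map_det, RingHom.mapMatrix_apply, hmap]


variable {E : Type*} [AddCommGroup E] [Module ℂ E] [FiniteDimensional ℂ E]

lemma finrank_sup_span_singleton (U : Submodule ℂ E) (x : E) (hx : x ∉ U) :
    finrank ℂ ↥(U ⊔ Submodule.span ℂ {x}) = finrank ℂ U + 1 := by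
  have hx0 : x ≠ 0 := fun h => hx (h ▸ U.zero_mem)
  have hinf : U ⊓ Submodule.span ℂ {x} = ⊥ := by
    rw [eq_bot_iff]
    intro y hy
    rw [Submodule.mem_inf] at hy
    obtain ⟨hyU, hys⟩ := hy
    rw [Submodule.mem_span_singleton] at hys
    obtain ⟨c, rfl⟩ := hys
    rcases eq_or_ne c 0 with rfl | hc
    · simp
    · exact absurd (by simpa [smul_smul, inv_mul_cancel₀ hc] using U.smul_mem c⁻¹ hyU) hx
  have h := Submodule.finrank_sup_add_finrank_inf_eq U (Submodule.span ℂ {x})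
  rw [hinf, finrank_span_singleton hx0] at h
  simpa using h

lemma even_finrank_of_conj (T : E → E)
    (hadd : ∀ x y, T (x + y) = T x + T y)
    (hsm : ∀ (c : ℂ) (x : E), T (c • x) = (starRingEnd ℂ c) • T x)
    (hTT : ∀ x, T (T x) = -x) (V : Submodule ℂ E) (hTV : ∀ x ∈ V, T x ∈ V) :
    Even (finrank ℂ V) := by
  have hT0 : T 0 = 0 := by simpa using hsm 0 0
  suffices H : ∀ (k : ℕ) (U : Submodule ℂ E), U ≤ V → (∀ x ∈ U, T x ∈ U) →
      Even (finrank ℂ U) → finrank ℂ V ≤ finrank ℂ U + k →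
      Even (finrank ℂ V) by
    refine H (finrank ℂ V) ⊥ bot_le ?_ (by simp) (by simp)
    intro x hx
    rw [Submodule.mem_bot] at hx
    simp [hx, hT0]
  intro k
  induction k with
  | zero =>
    intro U hUV hTU hUe hle
    exact (Submodule.eq_of_le_of_finrank_le hUV (by simpa using hle)) ▸ hUe
  | succ k ih =>
    intro U hUV hTU hUe hle
    by_cases hfin : finrank ℂ V ≤ finrank ℂ U
    · exact (Submodule.eq_of_le_of_finrank_le hUV hfin) ▸ hUe
    · push_neg at hfin
      have hUV' : U < V := lt_of_le_of_ne hUV (by rintro rfl; exact lt_irrefl _ hfin)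
      obtain ⟨v, hvV, hvU⟩ := SetLike.exists_of_lt hUV'
      set U₁ := U ⊔ Submodule.span ℂ {v} with hU₁
      have hvU₁ : v ∈ U₁ :=
        le_sup_right (α := Submodule ℂ E) (Submodule.mem_span_singleton_self v)
      have hUU₁ : U ≤ U₁ := le_sup_left
      have hTvU₁ : T v ∉ U₁ := by
        intro hTv
        rw [hU₁, Submodule.mem_sup] at hTv
        obtain ⟨u, hu, z, hz, huz⟩ := hTv
        rw [Submodule.mem_span_singleton] at hz
        obtain ⟨a, rfl⟩ := hz
        -- T v = u + a • v
        have h1 : -v = T u + (starRingEnd ℂ a) • u + ((starRingEnd ℂ a) * a) • v := by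
          rw [← hTT v]
          conv_lhs => rw [← huz]
          rw [hadd, hsm, ← huz, smul_add, smul_smul]
          abel
        have h2 : (1 + (starRingEnd ℂ a) * a) • v = -(T u + (starRingEnd ℂ a) • u) := by
          linear_combination (norm := module) -h1
        have hc0 : (1 + (starRingEnd ℂ a) * a) ≠ 0 := by
          intro h0
          have : (1 + (starRingEnd ℂ a) * a).re = 0 := by rw [h0]; simp
          rw [Complex.add_re, Complex.one_re] at this
          have h3 : ((starRingEnd ℂ a) * a).re = Complex.normSq a := by
            simp [Complex.normSq, Complex.mul_re, mul_comm]
          rw [h3] at this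
          nlinarith [Complex.normSq_nonneg a]
        have hvmem : v ∈ U := by
          have hmem : (1 + (starRingEnd ℂ a) * a) • v ∈ U := by
            rw [h2]
            exact neg_mem (add_mem (hTU u hu) (U.smul_mem _ hu))
          have := U.smul_mem (1 + (starRingEnd ℂ a) * a)⁻¹ hmem
          rwa [smul_smul, inv_mul_cancel₀ hc0, one_smul] at this
        exact hvU hvmem
      set U₂ := U₁ ⊔ Submodule.span ℂ {T v} with hU₂
      have hTvU₂ : T v ∈ U₂ :=
        le_sup_right (α := Submodule ℂ E) (Submodule.mem_span_singleton_self (T v))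
      have hU₁U₂ : U₁ ≤ U₂ := le_sup_left
      have hU₁V : U₁ ≤ V :=
        sup_le hUV (by rwa [Submodule.span_le, Set.singleton_subset_iff])
      have hU₂V : U₂ ≤ V :=
        sup_le hU₁V (by rw [Submodule.span_le, Set.singleton_subset_iff]; exact hTV v hvV)
      have hrk : finrank ℂ U₂ = finrank ℂ U + 2 := by
        rw [hU₂, finrank_sup_span_singleton U₁ _ hTvU₁, hU₁,
          finrank_sup_span_singleton U v hvU]
      have hTU₂ : ∀ x ∈ U₂, T x ∈ U₂ := by
        intro x hx
        rw [hU₂, Submodule.mem_sup] at hx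
        obtain ⟨y, hy, z, hz, rfl⟩ := hx
        rw [hU₁, Submodule.mem_sup] at hy
        obtain ⟨u, hu, w, hw, rfl⟩ := hy
        rw [Submodule.mem_span_singleton] at hw hz
        obtain ⟨b, rfl⟩ := hw
        obtain ⟨c, rfl⟩ := hz
        have : T (u + b • v + c • T v)
            = T u + (starRingEnd ℂ b) • T v + (starRingEnd ℂ c) • (-v) := by
          rw [hadd, hadd, hsm, hsm, hTT]
        rw [this]
        refine add_mem (add_mem ?_ ?_) ?_
        · exact hU₁U₂ (hUU₁ (hTU u hu))
        · exact U₂.smul_mem _ hTvU₂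
        · exact U₂.smul_mem _ (neg_mem (hU₁U₂ hvU₁))
      refine ih U₂ hU₂V hTU₂ (by rw [hrk]; exact hUe.add (even_two)) ?_
      rw [hrk]
      omega


end BlockConjAux

open Module BlockConjAux

/-- For complex `A, B` and `M = [[A, B], [-conj B, conj A]]`, the characteristic
polynomial of `M` has real coefficients; consequently the eigenvalues of `M`
occur in conjugate pairs (with matching multiplicities), and in particular every
real eigenvalue has even algebraic multiplicity. -/
theorem block_conj_charpoly_real_coeff {n : ℕ} (A B : Matrix (Fin n) (Fin n) ℂ) :
    let M : Matrix (Fin n ⊕ Fin n) (Fin n ⊕ Fin n) ℂ :=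
      Matrix.fromBlocks A B (-(B.map (starRingEnd ℂ))) (A.map (starRingEnd ℂ))
    (∀ i, (M.charpoly.coeff i).im = 0) ∧
      (∀ μ : ℂ, M.charpoly.rootMultiplicity μ =
        M.charpoly.rootMultiplicity (starRingEnd ℂ μ)) ∧
      (∀ μ : ℂ, μ.im = 0 → Even (M.charpoly.rootMultiplicity μ)) := by
  intro M
  set σ := starRingEnd ℂ with hσ
  set J : Matrix (Fin n ⊕ Fin n) (Fin n ⊕ Fin n) ℂ := fromBlocks 0 1 (-1) 0 with hJ
  have hMσ : M.map σ = fromBlocks (A.map σ) (B.map σ) (-B) A := by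
    ext (i | i) (j | j) <;>
      simp [M, σ, Matrix.map_apply, fromBlocks]
  have hJM : (M.map σ) * J = J * M := by
    rw [hMσ, hJ]
    show fromBlocks (A.map σ) (B.map σ) (-B) A * fromBlocks 0 1 (-1) 0
      = fromBlocks 0 1 (-1) 0 * M
    rw [fromBlocks_multiply, fromBlocks_multiply]
    simp [M]
    exact ⟨rfl, rfl⟩
  have hJJ : J * J = -1 := by
    rw [hJ, fromBlocks_multiply]
    simp [← fromBlocks_one, fromBlocks_neg]
  have hdetJ : J.det ≠ 0 := by
    intro h0
    have h := congrArg det hJJ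
    rw [det_mul, h0, mul_zero, det_neg, det_one, mul_one] at h
    have hcard : Even (Fintype.card (Fin n ⊕ Fin n)) := by
      have : Fintype.card (Fin n ⊕ Fin n) = n + n := by simp
      rw [this]
      exact ⟨n, rfl⟩
    rw [hcard.neg_one_pow] at h
    exact one_ne_zero h.symm
  have hfix : M.charpoly.map σ = M.charpoly := by
    rw [← Matrix.charpoly_map]
    exact charpoly_eq_of_intertwine M (M.map σ) J hJM hdetJ
  refine ⟨?_, ?_, ?_⟩
  · intro i
    have h := congrArg (fun p => p.coeff i) hfix
    simp only [coeff_map] at h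
    exact Complex.conj_eq_iff_im.mp h
  · intro μ
    have h := Polynomial.eq_rootMultiplicity_map (RingHom.injective (σ : ℂ →+* ℂ)) μ
      (p := M.charpoly)
    rw [hfix] at h
    exact h
  · intro μ hμ
    have hμc : σ μ = μ := Complex.conj_eq_iff_im.mpr hμ
    -- linear-map reformulation
    set φ : Module.End ℂ ((Fin n ⊕ Fin n) → ℂ) := Matrix.toLin' M with hφ
    have hψ : Matrix.toLin' (M - μ • 1) = φ - μ • 1 := by
      rw [map_sub, _root_.map_smul, Matrix.toLin'_one, hφ]
      rfl
    have hmult : M.charpoly.rootMultiplicity μ = finrank ℂ (φ.maxGenEigenspace μ) := by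
      have h1 : (φ - μ • 1).maxGenEigenspace 0 = φ.maxGenEigenspace μ := by
        ext x
        simp only [Module.End.mem_maxGenEigenspace, zero_smul, sub_zero]
      have h2 : LinearMap.charpoly (φ - μ • 1) = (M - μ • 1).charpoly := by
        rw [← hψ, ← LinearMap.charpoly_toMatrix (Matrix.toLin' (M - μ • 1))
          (Pi.basisFun ℂ (Fin n ⊕ Fin n)), LinearMap.toMatrix_eq_toMatrix',
          LinearMap.toMatrix'_toLin']
      rw [← h1, LinearMap.finrank_maxGenEigenspace_zero_eq, h2, charpoly_shift,
        ← rootMultiplicity_eq_natTrailingDegree]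
    rw [hmult]
    -- the conjugate structure
    set T : ((Fin n ⊕ Fin n) → ℂ) → ((Fin n ⊕ Fin n) → ℂ) :=
      fun v => J.mulVec (fun i => σ (v i)) with hT
    have hJσ : J.map σ = J := by
      ext (i | i) (j | j) <;>
        simp [J, σ, Matrix.map_apply, fromBlocks, Matrix.one_apply, apply_ite]
    have hstarMulVec : ∀ (N : Matrix (Fin n ⊕ Fin n) (Fin n ⊕ Fin n) ℂ)
        (w : (Fin n ⊕ Fin n) → ℂ),
        (fun i => σ ((N.mulVec w) i)) = (N.map σ).mulVec (fun i => σ (w i)) := by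
      intro N w
      funext i
      simp [Matrix.mulVec, dotProduct, map_sum, Matrix.map_apply]
    have hadd : ∀ x y, T (x + y) = T x + T y := by
      intro x y
      rw [hT]
      have : (fun i => σ ((x + y) i)) = (fun i => σ (x i)) + (fun i => σ (y i)) := by
        funext i; simp
      simp only [this, Matrix.mulVec_add]
    have hsm : ∀ (c : ℂ) (x : (Fin n ⊕ Fin n) → ℂ), T (c • x) = σ c • T x := by
      intro c x
      rw [hT]
      have : (fun i => σ ((c • x) i)) = σ c • (fun i => σ (x i)) := by
        funext i; simp [Pi.smul_apply, smul_eq_mul]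
      simp only [this, Matrix.mulVec_smul]
    have hTT : ∀ x, T (T x) = -x := by
      intro x
      rw [hT]
      simp only
      rw [hstarMulVec, hJσ, Matrix.mulVec_mulVec, hJJ]
      funext i
      simp [Matrix.neg_mulVec, Matrix.one_mulVec, σ]
    have hcomm : ∀ v, M.mulVec (T v) = T (M.mulVec v) := by
      intro v
      have hMJ : M * J = J * M.map σ := by
        have := congrArg (fun N => N.map σ) hJM
        simpa [Matrix.map_mul, hJσ, Matrix.map_map, σ,
          show (M.map (starRingEnd ℂ)).map (starRingEnd ℂ) = M by
            ext i j; simp [Matrix.map_apply]] using this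
      rw [hT]
      simp only
      rw [Matrix.mulVec_mulVec, hMJ, ← Matrix.mulVec_mulVec, ← hstarMulVec]
    have hTV : ∀ x ∈ φ.maxGenEigenspace μ, T x ∈ φ.maxGenEigenspace μ := by
      have hcommφ : ∀ v, (φ - μ • 1) (T v) = T ((φ - μ • 1) v) := by
        intro v
        have h1 : φ (T v) = T (φ v) := by
          simp only [hφ, Matrix.toLin'_apply]
          exact hcomm v
        have h2 : T (φ v - μ • v) = T (φ v) - μ • T v := by
          have : φ v - μ • v = φ v + (-μ) • v := by rw [neg_smul, ← sub_eq_add_neg]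
          rw [this, hadd, hsm, map_neg, hμc, neg_smul, ← sub_eq_add_neg]
        simp only [LinearMap.sub_apply, LinearMap.smul_apply, Module.End.one_apply, h1, h2]
      have hcommpow : ∀ (k : ℕ) (v), ((φ - μ • 1) ^ k) (T v) = T (((φ - μ • 1) ^ k) v) := by
        intro k
        induction k with
        | zero => intro v; simp
        | succ k ih =>
          intro v
          rw [pow_succ, Module.End.mul_apply, Module.End.mul_apply, hcommφ, ih]
      intro x hx
      rw [Module.End.mem_maxGenEigenspace] at hx ⊢
      obtain ⟨k, hk⟩ := hx
      refine ⟨k, ?_⟩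
      rw [hcommpow, hk]
      simpa using hsm 0 0
    exact even_finrank_of_conj T hadd hsm hTT _ hTV
end

section
/- Define on Gr_{n,k}(ℂ) the function d(P, Q) = (1/2) √(Σᵢ arg(λᵢ((I-2Q)(I-2P)))²), where λᵢ are the eigenvalues of the unitary matrix (I-2Q)(I-2P) and arg takes values in [-π, π]. Then d(P, Q) = 0 if and only if P = Q, and d is symmetric: d(P, Q) = d(Q, P). -/
open Matrix

section Helpers

open Polynomial

private lemma grAux_charpoly_eval {n : ℕ} (M : Matrix (Fin n) (Fin n) ℂ) (μ : ℂ) :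
    M.charpoly.eval μ = (μ • (1 : Matrix (Fin n) (Fin n) ℂ) - M).det := by
  rw [Matrix.charpoly, ← Polynomial.coe_evalRingHom, RingHom.map_det]
  congr 1
  ext i j
  by_cases h : i = j <;>
    simp [charmatrix_apply, Matrix.smul_apply, Matrix.one_apply, Matrix.diagonal_apply, h]

private lemma grAux_charpoly_conj {n : ℕ} (A M : Matrix (Fin n) (Fin n) ℂ) (hA : A * A = 1) :
    (A * M * A).charpoly = M.charpoly := by
  have hmap : (A.map C) * (A.map C) = 1 := by
    rw [← Matrix.map_mul, hA, Matrix.map_one _ (map_zero C) (map_one C)]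
  have hcm : charmatrix (A * M * A) = (A.map C) * charmatrix M * (A.map C) := by
    unfold charmatrix
    simp only [RingHom.mapMatrix_apply]
    rw [Matrix.mul_sub, Matrix.sub_mul, ← Matrix.map_mul, ← Matrix.map_mul]
    congr 1
    rw [← (scalar_commute X (fun r => Commute.all _ _) (A.map C)).eq, Matrix.mul_assoc, hmap,
      Matrix.mul_one]
  rw [Matrix.charpoly, hcm, det_mul, det_mul, Matrix.charpoly, mul_comm, ← mul_assoc,
    ← det_mul, hmap, det_one, one_mul]

private lemma grAux_root_normSq_one {n : ℕ} {U : Matrix (Fin n) (Fin n) ℂ} (hU : Uᴴ * U = 1)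
    {μ : ℂ} (hμ : μ ∈ U.charpoly.roots) : Complex.normSq μ = 1 := by
  have hroot : U.charpoly.eval μ = 0 := (Polynomial.isRoot_of_mem_roots hμ)
  rw [grAux_charpoly_eval] at hroot
  obtain ⟨v, hv0, hv⟩ := (Matrix.exists_mulVec_eq_zero_iff).2 hroot
  have hUv : U.mulVec v = μ • v := by
    rw [Matrix.sub_mulVec, Matrix.smul_mulVec, Matrix.one_mulVec, sub_eq_zero] at hv
    exact hv.symm
  have h1 : star (U.mulVec v) ⬝ᵥ (U.mulVec v) = star v ⬝ᵥ v := by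
    rw [Matrix.star_mulVec, Matrix.dotProduct_mulVec, Matrix.vecMul_vecMul, hU,
      Matrix.vecMul_one]
  rw [hUv, star_smul, smul_dotProduct, dotProduct_smul, smul_eq_mul,
    smul_eq_mul] at h1
  have hc : star v ⬝ᵥ v ≠ 0 := by
    intro h
    apply hv0
    have hre : ∑ i, Complex.normSq (v i) = 0 := by
      have h2 : (↑(∑ i, Complex.normSq (v i)) : ℂ) = 0 := by
        push_cast
        rw [← h]
        simp [dotProduct, Complex.normSq_eq_conj_mul_self, Pi.star_apply]
      exact_mod_cast h2
    funext i
    exact Complex.normSq_eq_zero.1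
      ((Finset.sum_eq_zero_iff_of_nonneg (fun i _ => Complex.normSq_nonneg _)).1 hre i
        (Finset.mem_univ i))
  have h1' : (starRingEnd ℂ μ * μ) * (star v ⬝ᵥ v) = 1 * (star v ⬝ᵥ v) := by
    rw [one_mul, mul_assoc]; exact h1
  have hkey : starRingEnd ℂ μ * μ = 1 := mul_right_cancel₀ hc h1'
  have h2 : ((Complex.normSq μ : ℂ)) = 1 := by
    rw [Complex.normSq_eq_conj_mul_self]; exact hkey
  exact_mod_cast h2

private lemma grAux_unitary_trace {n : ℕ} {U : Matrix (Fin n) (Fin n) ℂ} (hU : Uᴴ * U = 1)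
    (htr : U.trace = (n : ℂ)) : U = 1 := by
  have hcol : ∀ j, ∑ i, Complex.normSq (U i j) = 1 := by
    intro j
    have h : (Uᴴ * U) j j = (1 : Matrix (Fin n) (Fin n) ℂ) j j := by rw [hU]
    rw [Matrix.mul_apply, Matrix.one_apply_eq] at h
    have h2 : (↑(∑ i, Complex.normSq (U i j)) : ℂ) = 1 := by
      push_cast
      rw [← h]
      simp [Matrix.conjTranspose_apply, Complex.normSq_eq_conj_mul_self]
    exact_mod_cast h2
  have hdiagle : ∀ j, Complex.normSq (U j j) ≤ 1 := by
    intro j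
    rw [← hcol j]
    exact Finset.single_le_sum (f := fun i => Complex.normSq (U i j))
      (fun i _ => Complex.normSq_nonneg _) (Finset.mem_univ j)
  have hrle : ∀ j, (U j j).re ≤ 1 := by
    intro j
    have := hdiagle j
    rw [Complex.normSq_apply] at this
    nlinarith [sq_nonneg ((U j j).re - 1), sq_nonneg (U j j).im]
  have hsum : ∑ j, (U j j).re = n := by
    have : (U.trace).re = (n : ℝ) := by rw [htr]; simp
    rw [Matrix.trace] at this
    simpa [Matrix.diag, Complex.re_sum] using this
  have hre1 : ∀ j, (U j j).re = 1 := by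
    intro j
    by_contra hne
    have hlt : (U j j).re < 1 := lt_of_le_of_ne (hrle j) hne
    have : ∑ j, (U j j).re < ∑ _j : Fin n, (1 : ℝ) := by
      apply Finset.sum_lt_sum (fun i _ => hrle i) ⟨j, Finset.mem_univ j, hlt⟩
    simp [hsum] at this
  have hdiag : ∀ j, U j j = 1 := by
    intro j
    have h1 := hdiagle j
    rw [Complex.normSq_apply, hre1 j] at h1
    have him : (U j j).im = 0 := by nlinarith [sq_nonneg (U j j).im]
    exact Complex.ext (hre1 j) him
  ext i j
  by_cases hij : i = j
  · subst hij; rw [hdiag, Matrix.one_apply_eq]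
  · rw [Matrix.one_apply_ne hij]
    have h := hcol j
    rw [← Finset.add_sum_erase _ _ (Finset.mem_univ j), hdiag j] at h
    simp only [Complex.normSq_one] at h
    have h0 : ∑ i ∈ Finset.univ.erase j, Complex.normSq (U i j) = 0 := by linarith
    have := (Finset.sum_eq_zero_iff_of_nonneg (fun i _ => Complex.normSq_nonneg _)).1 h0 i
      (Finset.mem_erase.2 ⟨hij, Finset.mem_univ i⟩)
    exact Complex.normSq_eq_zero.1 this

private lemma grAux_multiset_zero {s : Multiset ℝ} (h : ∀ x ∈ s, 0 ≤ x) (hs : s.sum = 0) :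
    ∀ x ∈ s, x = 0 := by
  induction s using Multiset.induction with
  | empty => simp
  | cons a s ih =>
    simp only [Multiset.sum_cons] at hs
    have ha : 0 ≤ a := h a (Multiset.mem_cons_self a s)
    have hsn : 0 ≤ s.sum := Multiset.sum_nonneg (fun x hx => h x (Multiset.mem_cons_of_mem hx))
    intro x hx
    rcases Multiset.mem_cons.1 hx with rfl | hx'
    · linarith
    · exact ih (fun y hy => h y (Multiset.mem_cons_of_mem hy)) (by linarith) x hx'

end Helpers

/-- The Grassmannian distance
`d(P, Q) = (1/2) √(∑ᵢ arg(λᵢ((I-2Q)(I-2P)))²)`, where the `λᵢ` are the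
eigenvalues (with multiplicity) of the unitary matrix `(I-2Q)(I-2P)` and
`arg` takes values in `[-π, π]`. -/
noncomputable def grDist {n : ℕ} (P Q : Matrix (Fin n) (Fin n) ℂ) : ℝ :=
  (1 / 2) * Real.sqrt
    (((((1 - (2 : ℂ) • Q) * (1 - (2 : ℂ) • P)).charpoly.roots).map
      (fun μ => (Complex.arg μ) ^ 2)).sum)

/-- On `Gr_{n,k}(ℂ)`, the distance `d` vanishes exactly on the diagonal and is
symmetric: `d(P,Q) = 0 ↔ P = Q`, and `d(P,Q) = d(Q,P)`. -/
theorem grDist_eq_zero_iff_and_symm {n k : ℕ}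
    (P Q : Matrix (Fin n) (Fin n) ℂ)
    (hP2 : P * P = P) (hPh : Pᴴ = P) (hPrank : P.rank = k)
    (hQ2 : Q * Q = Q) (hQh : Qᴴ = Q) (hQrank : Q.rank = k) :
    (grDist P Q = 0 ↔ P = Q) ∧ grDist P Q = grDist Q P := by
  set A : Matrix (Fin n) (Fin n) ℂ := 1 - (2 : ℂ) • P with hAdef
  set B : Matrix (Fin n) (Fin n) ℂ := 1 - (2 : ℂ) • Q with hBdef
  have hA : A * A = 1 := by
    simp only [hAdef, Matrix.mul_sub, Matrix.sub_mul, Matrix.smul_mul, Matrix.mul_smul,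
      smul_smul, hP2, Matrix.mul_one, Matrix.one_mul]
    module
  have hB : B * B = 1 := by
    simp only [hBdef, Matrix.mul_sub, Matrix.sub_mul, Matrix.smul_mul, Matrix.mul_smul,
      smul_smul, hQ2, Matrix.mul_one, Matrix.one_mul]
    module
  have hAh : Aᴴ = A := by
    simp [hAdef, Matrix.conjTranspose_sub, Matrix.conjTranspose_smul, hPh]
  have hBh : Bᴴ = B := by
    simp [hBdef, Matrix.conjTranspose_sub, Matrix.conjTranspose_smul, hQh]
  have hU : (B * A)ᴴ * (B * A) = 1 := by
    rw [Matrix.conjTranspose_mul, hAh, hBh, Matrix.mul_assoc A B (B * A),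
      ← Matrix.mul_assoc B B A, hB, Matrix.one_mul, hA]
  constructor
  · constructor
    · -- grDist P Q = 0 → P = Q
      intro h
      unfold grDist at h
      set s : ℝ := ((((1 - (2 : ℂ) • Q) * (1 - (2 : ℂ) • P)).charpoly.roots).map
        (fun μ => (Complex.arg μ) ^ 2)).sum with hsdef
      have hsqrt : Real.sqrt s = 0 := by
        rcases mul_eq_zero.1 h with h' | h'
        · norm_num at h'
        · exact h'
      have hsnn : 0 ≤ s := by
        apply Multiset.sum_nonneg
        intro x hx
        obtain ⟨μ, _, rfl⟩ := Multiset.mem_map.1 hx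
        positivity
      have hs0 : s = 0 := le_antisymm (Real.sqrt_eq_zero'.1 hsqrt) hsnn
      have hall : ∀ μ ∈ (B * A).charpoly.roots, μ = 1 := by
        intro μ hμ
        have harg2 : (Complex.arg μ) ^ 2 = 0 :=
          grAux_multiset_zero (fun x hx => by
              obtain ⟨ν, _, rfl⟩ := Multiset.mem_map.1 hx; positivity) hs0
            _ (Multiset.mem_map.2 ⟨μ, hμ, rfl⟩)
        have harg : Complex.arg μ = 0 :=
          pow_eq_zero_iff (by norm_num : (2:ℕ) ≠ 0) |>.1 harg2
        have hns : Complex.normSq μ = 1 := grAux_root_normSq_one hU hμ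
        obtain ⟨hre, him⟩ := Complex.arg_eq_zero_iff.1 harg
        rw [Complex.normSq_apply, him] at hns
        have : μ.re = 1 := by nlinarith
        exact Complex.ext this him
      -- trace = n
      have hsp : ((B * A).charpoly).Splits := IsAlgClosed.splits _
      have hcard : Multiset.card ((B * A)).charpoly.roots = n := by
        rw [Polynomial.splits_iff_card_roots.1 hsp, Matrix.charpoly_natDegree_eq_dim,
          Fintype.card_fin]
      have hrepl : ((B * A)).charpoly.roots
          = Multiset.replicate (Multiset.card ((B * A)).charpoly.roots) 1 :=
        Multiset.eq_replicate_card.2 hall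
      have htr : (B * A).trace = (n : ℂ) := by
        rw [Matrix.trace_eq_sum_roots_charpoly, hrepl, Multiset.sum_replicate, hcard,
          nsmul_eq_mul, mul_one]
      have hBA1 : B * A = 1 := grAux_unitary_trace hU htr
      have hBA : B = A := by
        calc B = B * (A * A) := by rw [hA, Matrix.mul_one]
        _ = (B * A) * A := by rw [Matrix.mul_assoc]
        _ = A := by rw [hBA1, Matrix.one_mul]
      have h2 : (2 : ℂ) • Q = (2 : ℂ) • P := by
        have := hBA
        rw [hBdef, hAdef, sub_right_inj] at this
        exact this
      exact (smul_right_injective _ (two_ne_zero) h2).symm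
    · -- P = Q → grDist P Q = 0
      rintro rfl
      unfold grDist
      have h1 : (1 - (2 : ℂ) • P) * (1 - (2 : ℂ) • P) = 1 := hA
      rw [h1]
      have hall : ∀ μ ∈ (1 : Matrix (Fin n) (Fin n) ℂ).charpoly.roots, μ = 1 := by
        intro μ hμ
        have h := Polynomial.isRoot_of_mem_roots hμ
        rw [Polynomial.IsRoot, grAux_charpoly_eval] at h
        have hrw : μ • (1 : Matrix (Fin n) (Fin n) ℂ) - 1 = (μ - 1) • 1 := by
          rw [sub_smul, one_smul]
        rw [hrw, Matrix.det_smul, det_one, mul_one] at h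
        have := pow_eq_zero_iff'.1 h
        rw [sub_eq_zero] at this
        exact this.1
      have : ((((1 : Matrix (Fin n) (Fin n) ℂ)).charpoly.roots).map
          (fun μ => (Complex.arg μ) ^ 2)).sum = 0 := by
        apply Multiset.sum_eq_zero
        intro x hx
        obtain ⟨μ, hμ, rfl⟩ := Multiset.mem_map.1 hx
        rw [hall μ hμ]
        simp [Complex.arg_one]
      rw [this, Real.sqrt_zero, mul_zero]
  · -- symmetry
    have hsim : A * (B * A) * A = A * B := by
      rw [← Matrix.mul_assoc, Matrix.mul_assoc (A * B) A A, hA, Matrix.mul_one]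
    have hcp : (A * B).charpoly = (B * A).charpoly := by
      rw [← hsim]
      exact grAux_charpoly_conj A (B * A) hA
    unfold grDist
    rw [← hAdef, ← hBdef, hcp]
end
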